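/- The linear map γ from the Onsager algebra O (with basis A_m (m ∈ ℤ), G_l (l ∈ ℕ+) and brackets [A_l, A_m] = 2G_{l-m} for l > m, [G_l, A_m] = A_{m+l} - A_{m-l}, [G_l, G_m] = 0) to the loop algebra sl₂ ⊗ ℂ[t,t^{-1}], defined by γ(A_m) = x⁺ ⊗ t^m + x⁻ ⊗ t^{-m} and γ(G_l) = (1/2) h ⊗ (t^l - t^{-l}), is an injective Lie algebra homomorphism. -/

import Mathlib

open LaurentPolynomial

noncomputable section

/-- The (enlarged) loop algebra: `2×2` matrices over `ℂ[t,t⁻¹]`, with the commutator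
Lie bracket.  `sl₂ ⊗ ℂ[t,t⁻¹]` is its trace-zero part. -/
abbrev LoopM : Type := Matrix (Fin 2) (Fin 2) (LaurentPolynomial ℂ)

/-- `x⁺` in the loop algebra. -/
def xP : LoopM := !![0, 1; 0, 0]

/-- `x⁻` in the loop algebra. -/
def xM : LoopM := !![0, 0; 1, 0]

/-- `h` in the loop algebra. -/
def hS : LoopM := !![1, 0; 0, -1]

/-- `γ(A_m) = x⁺ ⊗ t^m + x⁻ ⊗ t^{-m}`. -/
def Amat (m : ℤ) : LoopM := (T m : LaurentPolynomial ℂ) • xP + (T (-m) : LaurentPolynomial ℂ) • xM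

/-- `γ(G_l) = (1/2) h ⊗ (t^l - t^{-l})`. -/
def Gmat (l : ℕ+) : LoopM :=
  ((1 / 2 : ℂ)) • ((T ((l : ℕ) : ℤ) - T (-((l : ℕ) : ℤ)) : LaurentPolynomial ℂ) • hS)

section

attribute [local instance] LieRing.ofAssociativeRing

lemma lie_xP_xM : ⁅xP, xM⁆ = hS := by
  rw [Ring.lie_def]
  simp only [xP, xM, hS, Matrix.mul_fin_two]
  norm_num
  simp [funext_iff, Fin.forall_fin_succ]

lemma lie_xM_xP : ⁅xM, xP⁆ = -hS := by
  rw [← lie_skew, lie_xP_xM]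

lemma lie_hS_xP : ⁅hS, xP⁆ = (2 : LaurentPolynomial ℂ) • xP := by
  rw [Ring.lie_def]
  simp only [xP, hS, Matrix.mul_fin_two]
  norm_num
  simp [funext_iff, Fin.forall_fin_succ]

lemma lie_hS_xM : ⁅hS, xM⁆ = (-2 : LaurentPolynomial ℂ) • xM := by
  rw [Ring.lie_def]
  simp only [xM, hS, Matrix.mul_fin_two]
  norm_num
  simp [funext_iff, Fin.forall_fin_succ]

lemma half_smul (x : LoopM) : (1/2 : ℂ) • x = (C (1/2) : LaurentPolynomial ℂ) • x := by
  rw [C_eq_algebraMap, algebraMap_smul]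

lemma C_half_mul_two : (C (1/2) : LaurentPolynomial ℂ) * 2 = 1 := by
  rw [show (2 : LaurentPolynomial ℂ) = C 2 from (map_ofNat C 2).symm, ← map_mul]
  norm_num

lemma lieL (t : LaurentPolynomial ℂ) (x y : LoopM) : ⁅t • x, y⁆ = t • ⁅x, y⁆ := by
  simp only [Ring.lie_def, smul_mul_assoc, mul_smul_comm, smul_sub]

lemma lieR (t : LaurentPolynomial ℂ) (x y : LoopM) : ⁅x, t • y⁆ = t • ⁅x, y⁆ := by
  simp only [Ring.lie_def, smul_mul_assoc, mul_smul_comm, smul_sub]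

lemma Gmat_eq (l : ℕ+) :
    Gmat l = ((C (1/2) * (T ((l:ℕ):ℤ) - T (-((l:ℕ):ℤ))) : LaurentPolynomial ℂ)) • hS := by
  rw [Gmat, half_smul, smul_smul]

lemma lie_AA (l m : ℤ) : ⁅Amat l, Amat m⁆ = ((T (l-m) - T (m-l) : LaurentPolynomial ℂ)) • hS := by
  simp only [Amat, add_lie, lie_add]
  simp only [lieL, lieR]
  simp only [lie_self, lie_xP_xM, lie_xM_xP, smul_zero, smul_neg, add_zero, zero_add, smul_smul]
  rw [sub_smul, T_sub, T_sub]
  module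

lemma lie_GA (l : ℕ+) (m : ℤ) :
    ⁅Gmat l, Amat m⁆ = Amat (m + (l:ℕ)) - Amat (m - (l:ℕ)) := by
  rw [Gmat_eq]
  simp only [Amat, add_lie, lie_add]
  simp only [lieL, lieR]
  simp only [lie_hS_xP, lie_hS_xM, smul_smul]
  match_scalars
  · simp only [sub_eq_add_neg, neg_add, neg_neg, T_add]
    linear_combination (T m * T ((l:ℕ):ℤ) - T m * T (-((l:ℕ):ℤ))) * C_half_mul_two
  · simp only [sub_eq_add_neg, neg_add, neg_neg, T_add]
    linear_combination (T (-m) * T (-((l:ℕ):ℤ)) - T (-m) * T ((l:ℕ):ℤ)) * C_half_mul_two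

lemma lie_GG (l m : ℕ+) : ⁅Gmat l, Gmat m⁆ = 0 := by
  rw [Gmat_eq, Gmat_eq]
  rw [lieL, lieR, lie_self, smul_zero, smul_zero]

lemma two_nsmul_Gmat (k : ℕ+) :
    (2 : ℕ) • Gmat k = ((T ((k:ℕ):ℤ) - T (-((k:ℕ):ℤ)) : LaurentPolynomial ℂ)) • hS := by
  rw [Gmat_eq, ← Nat.cast_smul_eq_nsmul (LaurentPolynomial ℂ), smul_smul]
  congr 1
  push_cast
  linear_combination (T ((k:ℕ):ℤ) - T (-((k:ℕ):ℤ))) * C_half_mul_two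

/-- evaluation of the `(i,j)` matrix entry (a Laurent polynomial) at exponent `n`. -/
def ev (i j : Fin 2) (n : ℤ) : LoopM →ₗ[ℂ] ℂ where
  toFun M := (M i j).coeff n
  map_add' M N := by
    show (M i j + N i j).coeff n = (M i j).coeff n + (N i j).coeff n
    exact Finsupp.add_apply _ _ _
  map_smul' c M := by
    show (c • M i j).coeff n = c * (M i j).coeff n
    rw [AddMonoidAlgebra.coeff_smul_apply, smul_eq_mul]

lemma ev_Amat_01 (n m : ℤ) : ev 0 1 n (Amat m) = if m = n then 1 else 0 := by
  simp [ev, Amat, xP, xM, Matrix.add_apply, Matrix.smul_apply, Finsupp.add_apply,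
    Finsupp.smul_apply]

lemma ev_Gmat_01 (n : ℤ) (l : ℕ+) : ev 0 1 n (Gmat l) = 0 := by
  simp [ev, Gmat, hS, Matrix.smul_apply, Finsupp.smul_apply]

lemma ev_Amat_00 (n m : ℤ) : ev 0 0 n (Amat m) = 0 := by
  simp [ev, Amat, xP, xM, Matrix.add_apply, Matrix.smul_apply, Finsupp.add_apply,
    Finsupp.smul_apply]

lemma ev_Gmat_00 (l' l : ℕ+) : ev 0 0 ((l:ℕ):ℤ) (Gmat l') = if l' = l then (1/2 : ℂ) else 0 := by
  have hne : (-((l':ℕ):ℤ)) ≠ ((l:ℕ):ℤ) := by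
    have h1 : (0:ℤ) < ((l':ℕ):ℤ) := by exact_mod_cast l'.2
    have h2 : (0:ℤ) < ((l:ℕ):ℤ) := by exact_mod_cast l.2
    omega
  have h00 : (Gmat l') 0 0
      = (1/2:ℂ) • (T ((l':ℕ):ℤ) - T (-((l':ℕ):ℤ)) : LaurentPolynomial ℂ) := by
    simp [Gmat, hS, Matrix.smul_apply]
  show ((Gmat l') 0 0).coeff ((l:ℕ):ℤ) = _
  rw [h00, AddMonoidAlgebra.coeff_smul_apply, AddMonoidAlgebra.coeff_sub, Finsupp.sub_apply]
  simp only [T_apply]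
  rw [if_neg hne]
  by_cases h : l' = l
  · subst h; simp
  · have hnn : (l':ℕ) ≠ (l:ℕ) := fun hc => h (PNat.coe_injective hc)
    have : ((l':ℕ):ℤ) ≠ ((l:ℕ):ℤ) := by exact_mod_cast hnn
    rw [if_neg this]; simp [h]

end

/-- The linear map `γ` from the Onsager algebra `O` (given by its basis `{A_m, G_l}` and
the Onsager bracket relations) to the loop algebra `sl₂ ⊗ ℂ[t,t⁻¹]`, determined by
`γ(A_m) = x⁺ ⊗ t^m + x⁻ ⊗ t^{-m}` and `γ(G_l) = (1/2) h ⊗ (t^l - t^{-l})`, is an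
injective Lie algebra homomorphism. -/
theorem gamma_injective_lieHom (O : Type*) [LieRing O] [LieAlgebra ℂ O]
    (A : ℤ → O) (G : ℕ+ → O)
    (b : Module.Basis (ℤ ⊕ ℕ+) ℂ O)
    (hbA : ∀ m : ℤ, b (Sum.inl m) = A m)
    (hbG : ∀ l : ℕ+, b (Sum.inr l) = G l)
    (hAA : ∀ l m : ℤ, (hlm : m < l) → ⁅A l, A m⁆ = 2 • G ⟨(l - m).toNat, by omega⟩)
    (hGA : ∀ (l : ℕ+) (m : ℤ), ⁅G l, A m⁆ = A (m + (l : ℕ)) - A (m - (l : ℕ)))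
    (hGG : ∀ l m : ℕ+, ⁅G l, G m⁆ = 0) :
    Function.Injective (b.constr ℂ (Sum.elim Amat Gmat)) ∧
      ∀ x y : O, b.constr ℂ (Sum.elim Amat Gmat) ⁅x, y⁆ =
        ⁅b.constr ℂ (Sum.elim Amat Gmat) x, b.constr ℂ (Sum.elim Amat Gmat) y⁆ := by
  letI : LieRing LoopM := LieRing.ofAssociativeRing
  set v : (ℤ ⊕ ℕ+) → LoopM := Sum.elim Amat Gmat with hv
  set γ : O →ₗ[ℂ] LoopM := b.constr ℂ v with hγ
  have hγA : ∀ m : ℤ, γ (A m) = Amat m := fun m => by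
    rw [← hbA]; exact b.constr_basis ℂ v (Sum.inl m)
  have hγG : ∀ l : ℕ+, γ (G l) = Gmat l := fun l => by
    rw [← hbG]; exact b.constr_basis ℂ v (Sum.inr l)
  constructor
  · -- injectivity
    rw [injective_iff_map_eq_zero]
    intro x hx
    have hrepr : γ x = (b.repr x).sum fun i a => a • v i := b.constr_apply ℂ v x
    have hA0 : ∀ m : ℤ, (b.repr x) (Sum.inl m) = 0 := by
      intro m
      have e : ev 0 1 m (γ x) = (b.repr x) (Sum.inl m) := by
        rw [hrepr, map_finsuppSum]
        rw [Finsupp.sum_eq_single (Sum.inl m)]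
        · rw [map_smul]
          simp [hv, ev_Amat_01]
        · rintro (m' | l) _ hne
          · rw [map_smul]
            have : m' ≠ m := fun h => hne (by rw [h])
            simp [hv, ev_Amat_01, this]
          · rw [map_smul]; simp [hv, ev_Gmat_01]
        · simp
      rw [hx, map_zero] at e
      exact e.symm
    have hG0 : ∀ l : ℕ+, (b.repr x) (Sum.inr l) = 0 := by
      intro l
      have e : ev 0 0 ((l:ℕ):ℤ) (γ x) = (1/2 : ℂ) * (b.repr x) (Sum.inr l) := by
        rw [hrepr, map_finsuppSum]
        rw [Finsupp.sum_eq_single (Sum.inr l)]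
        · rw [map_smul]
          simp [hv, ev_Gmat_00, mul_comm]
        · rintro (m' | l') _ hne
          · rw [map_smul]; simp [hv, ev_Amat_00]
          · rw [map_smul]
            have : l' ≠ l := fun h => hne (by rw [h])
            simp [hv, ev_Gmat_00, this]
        · simp
      rw [hx, map_zero] at e
      have := e.symm
      field_simp at this
      simpa using this
    have : b.repr x = 0 := by
      ext i
      rcases i with m | l
      · exact hA0 m
      · exact hG0 l
    exact (b.repr.map_eq_zero_iff).mp this
  · -- Lie homomorphism
    have key2 : ∀ l m : ℤ, m < l → γ ⁅A l, A m⁆ = ⁅Amat l, Amat m⁆ := by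
      intro l m h
      rw [hAA l m h, map_nsmul, hγG ⟨(l - m).toNat, by omega⟩, lie_AA, two_nsmul_Gmat ⟨(l - m).toNat, by omega⟩]
      have h1 : (((l - m).toNat : ℕ) : ℤ) = l - m :=
        Int.toNat_of_nonneg (by omega)
      show (T (((l - m).toNat : ℕ) : ℤ) - T (-(((l - m).toNat : ℕ) : ℤ))) • hS = _
      rw [h1, show -(l - m) = m - l from by ring]
    have key : ∀ i j : ℤ ⊕ ℕ+, γ ⁅b i, b j⁆ = ⁅γ (b i), γ (b j)⁆ := by
      rintro (l | l) (m | m)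
      · rw [hbA, hbA, hγA, hγA]
        rcases lt_trichotomy m l with h | h | h
        · rw [key2 l m h]
        · subst h; simp
        · rw [← lie_skew (A l), map_neg, key2 m l h, lie_skew]
      · rw [hbA, hbG, hγA, hγG]
        rw [← lie_skew (A l), map_neg, hGA, ← lie_skew (Amat l), lie_GA]
        rw [map_sub, hγA, hγA]
      · rw [hbG, hbA, hγG, hγA, hGA, lie_GA, map_sub, hγA, hγA]
      · rw [hbG, hbG, hγG, hγG, hGG, lie_GG, map_zero]
    intro x y
    let F : O →ₗ[ℂ] O →ₗ[ℂ] LoopM := LinearMap.mk₂ ℂ (fun x y => γ ⁅x, y⁆)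
      (fun a b c => by simp only [add_lie, map_add])
      (fun c a bb => by simp only [smul_lie, map_smul])
      (fun a b c => by simp only [lie_add, map_add])
      (fun c a bb => by simp only [lie_smul, map_smul])
    let B : O →ₗ[ℂ] O →ₗ[ℂ] LoopM := LinearMap.mk₂ ℂ (fun x y => ⁅γ x, γ y⁆)
      (fun a b c => by simp only [map_add, add_lie])
      (fun c a bb => by simp only [map_smul, smul_lie])
      (fun a b c => by simp only [map_add, lie_add])
      (fun c a bb => by simp only [map_smul, lie_smul])
    have hFB : F = B := by
      apply b.ext; intro i
      apply b.ext; intro j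
      exact key i j
    exact DFunLike.congr_fun (DFunLike.congr_fun hFB x) y
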